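/- Let $t > 0$, $\mu\in\mathbb{R}$, and $S(\mu,\xi)$ as above, and define $H(t,\mu,\xi) = \frac{1}{1 - it(\xi-\mu)^2(\xi^2+\mu\xi+\mu^2+1)}$. Then for all $\xi\in\mathbb{R}$, $e^{-itS(\mu,\xi)} = H(t,\mu,\xi)\,\partial_\xi\left((\xi-\mu)e^{-itS(\mu,\xi)}\right)$, and $|H(t,\mu,\xi)| \leq \frac{C}{1 + t(\xi-\mu)^2(\xi^2+\mu\xi+\mu^2+1)}$ for some absolute constant $C$. -/

import Mathlib

noncomputable def Sphase (μ ξ : ℝ) : ℝ :=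
  (1 / 4) * ξ ^ 4 + (1 / 2) * ξ ^ 2 - (μ ^ 3 + μ) * ξ + (3 / 4) * μ ^ 4 + (1 / 2) * μ ^ 2

noncomputable def Hfun (t μ ξ : ℝ) : ℂ :=
  1 / (1 - Complex.I * (t : ℂ) * ((ξ : ℂ) - μ) ^ 2 * ((ξ : ℂ) ^ 2 + (μ : ℂ) * ξ + (μ : ℂ) ^ 2 + 1))

theorem stmt7 :
    (∀ (t : ℝ), 0 < t → ∀ μ ξ : ℝ,
      Complex.exp (-Complex.I * (t : ℂ) * (Sphase μ ξ : ℂ)) =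
        Hfun t μ ξ *
          deriv (fun x : ℝ => ((x : ℂ) - μ) *
            Complex.exp (-Complex.I * (t : ℂ) * (Sphase μ x : ℂ))) ξ) ∧
    ∃ C > (0 : ℝ), ∀ (t : ℝ), 0 < t → ∀ μ ξ : ℝ,
      ‖Hfun t μ ξ‖ ≤
        C / (1 + t * (ξ - μ) ^ 2 * (ξ ^ 2 + μ * ξ + μ ^ 2 + 1)) := by
  constructor
  · intro t ht μ ξ
    set q : ℂ := (ξ : ℂ) ^ 2 + (μ : ℂ) * ξ + (μ : ℂ) ^ 2 + 1 with hq
    -- complex phase polynomial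
    have hP : HasDerivAt (fun z : ℂ => -Complex.I * (t : ℂ) *
        ((1/4) * z ^ 4 + (1/2) * z ^ 2 - ((μ:ℂ) ^ 3 + μ) * z + (3/4) * (μ:ℂ) ^ 4 + (1/2) * (μ:ℂ) ^ 2))
        (-Complex.I * (t : ℂ) * ((ξ:ℂ) ^ 3 + ξ - ((μ:ℂ) ^ 3 + μ))) ξ := by
      have h1 := ((((hasDerivAt_pow 4 (ξ:ℂ)).const_mul (1/4 : ℂ)).add
        ((hasDerivAt_pow 2 (ξ:ℂ)).const_mul (1/2 : ℂ))).sub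
        ((hasDerivAt_id (ξ:ℂ)).const_mul ((μ:ℂ) ^ 3 + μ))).add_const ((3/4) * (μ:ℂ) ^ 4 + (1/2) * (μ:ℂ) ^ 2)
      have h2 := h1.const_mul (-Complex.I * (t : ℂ))
      simp only [id_eq] at h2
      convert h2 using 1
      · rfl
      · rfl
      · funext z
        simp only [Pi.add_apply, Pi.sub_apply]
        ring
      · rw [show (4:ℕ) - 1 = 3 from rfl, show (2:ℕ) - 1 = 1 from rfl]
        ring
    have hE : HasDerivAt (fun z : ℂ => (z - (μ:ℂ)) * Complex.exp (-Complex.I * (t : ℂ) *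
        ((1/4) * z ^ 4 + (1/2) * z ^ 2 - ((μ:ℂ) ^ 3 + μ) * z + (3/4) * (μ:ℂ) ^ 4 + (1/2) * (μ:ℂ) ^ 2)))
        (1 * Complex.exp (-Complex.I * (t : ℂ) *
          ((1/4) * (ξ:ℂ) ^ 4 + (1/2) * (ξ:ℂ) ^ 2 - ((μ:ℂ) ^ 3 + μ) * ξ + (3/4) * (μ:ℂ) ^ 4 + (1/2) * (μ:ℂ) ^ 2))
          + ((ξ:ℂ) - μ) * (Complex.exp (-Complex.I * (t : ℂ) *
          ((1/4) * (ξ:ℂ) ^ 4 + (1/2) * (ξ:ℂ) ^ 2 - ((μ:ℂ) ^ 3 + μ) * ξ + (3/4) * (μ:ℂ) ^ 4 + (1/2) * (μ:ℂ) ^ 2))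
          * (-Complex.I * (t : ℂ) * ((ξ:ℂ) ^ 3 + ξ - ((μ:ℂ) ^ 3 + μ))))) ξ :=
      ((hasDerivAt_id (ξ:ℂ)).sub_const (μ:ℂ)).mul hP.cexp
    have hR := hE.comp_ofReal
    have hfun : (fun x : ℝ => ((x : ℂ) - μ) *
        Complex.exp (-Complex.I * (t : ℂ) * (Sphase μ x : ℂ))) =
        (fun z : ℂ => (z - (μ:ℂ)) * Complex.exp (-Complex.I * (t : ℂ) *
        ((1/4) * z ^ 4 + (1/2) * z ^ 2 - ((μ:ℂ) ^ 3 + μ) * z + (3/4) * (μ:ℂ) ^ 4 + (1/2) * (μ:ℂ) ^ 2))) ∘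
        (fun x : ℝ => (x : ℂ)) := by
      funext x
      simp only [Function.comp, Sphase]
      push_cast
      ring_nf
    have hderiv : deriv (fun x : ℝ => ((x : ℂ) - μ) *
        Complex.exp (-Complex.I * (t : ℂ) * (Sphase μ x : ℂ))) ξ =
        1 * Complex.exp (-Complex.I * (t : ℂ) *
          ((1/4) * (ξ:ℂ) ^ 4 + (1/2) * (ξ:ℂ) ^ 2 - ((μ:ℂ) ^ 3 + μ) * ξ + (3/4) * (μ:ℂ) ^ 4 + (1/2) * (μ:ℂ) ^ 2))
          + ((ξ:ℂ) - μ) * (Complex.exp (-Complex.I * (t : ℂ) *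
          ((1/4) * (ξ:ℂ) ^ 4 + (1/2) * (ξ:ℂ) ^ 2 - ((μ:ℂ) ^ 3 + μ) * ξ + (3/4) * (μ:ℂ) ^ 4 + (1/2) * (μ:ℂ) ^ 2))
          * (-Complex.I * (t : ℂ) * ((ξ:ℂ) ^ 3 + ξ - ((μ:ℂ) ^ 3 + μ)))) := by
      apply HasDerivAt.deriv
      rw [hfun]
      exact hR
    rw [hderiv]
    have hexp : -Complex.I * (t : ℂ) *
        ((1/4) * (ξ:ℂ) ^ 4 + (1/2) * (ξ:ℂ) ^ 2 - ((μ:ℂ) ^ 3 + μ) * ξ + (3/4) * (μ:ℂ) ^ 4 + (1/2) * (μ:ℂ) ^ 2)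
        = -Complex.I * (t : ℂ) * (Sphase μ ξ : ℂ) := by
      simp only [Sphase]; push_cast; ring
    rw [hexp]
    -- now algebra
    have hzne : (1 - Complex.I * (t : ℂ) * ((ξ : ℂ) - μ) ^ 2 * q) ≠ 0 := by
      have hz' : (1 - Complex.I * (t : ℂ) * ((ξ : ℂ) - μ) ^ 2 * q)
          = 1 - Complex.I * ((t * ((ξ - μ) ^ 2 * (ξ ^ 2 + μ * ξ + μ ^ 2 + 1)) : ℝ) : ℂ) := by
        push_cast [hq]; ring
      rw [hz']
      intro h
      have h2 := congrArg Complex.re h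
      simp only [Complex.sub_re, Complex.mul_re, Complex.I_re, Complex.I_im,
        Complex.ofReal_re, Complex.ofReal_im, Complex.one_re, Complex.zero_re] at h2
      norm_num at h2
    rw [Hfun]
    rw [← hq]
    field_simp
    rw [hq]
    ring
  · refine ⟨2, by norm_num, ?_⟩
    intro t ht μ ξ
    set a : ℝ := t * (ξ - μ) ^ 2 * (ξ ^ 2 + μ * ξ + μ ^ 2 + 1) with haeq
    have hQ : (0:ℝ) < ξ ^ 2 + μ * ξ + μ ^ 2 + 1 := by nlinarith [sq_nonneg (2*ξ + μ), sq_nonneg μ]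
    have ha : 0 ≤ a := by
      have := sq_nonneg (ξ - μ)
      positivity
    have hz : (1 - Complex.I * (t : ℂ) * ((ξ : ℂ) - μ) ^ 2 * ((ξ : ℂ) ^ 2 + (μ : ℂ) * ξ + (μ : ℂ) ^ 2 + 1))
        = 1 - Complex.I * (a : ℂ) := by push_cast [haeq]; ring
    have habs : ‖(1 - Complex.I * (a : ℂ))‖ = Real.sqrt (1 + a ^ 2) := by
      rw [Complex.norm_def, Complex.normSq_apply]
      simp [Complex.sub_re, Complex.sub_im, Complex.mul_re, Complex.mul_im]
      ring_nf
    have hsq : Real.sqrt (1 + a ^ 2) > 0 := Real.sqrt_pos.mpr (by positivity)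
    have hs2 : (Real.sqrt (1 + a ^ 2)) ^ 2 = 1 + a ^ 2 := Real.sq_sqrt (by positivity)
    rw [Hfun, hz, norm_div, norm_one, habs]
    rw [div_le_div_iff₀ hsq (by positivity)]
    nlinarith [sq_nonneg (a - 1), hsq, hs2, sq_nonneg (2 * Real.sqrt (1 + a ^ 2) - (1 + a))]
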